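/- Let (v, P) be a helical solution pair of the incompressible Euler equations ∂ₜv + (v·∇)v = −∇P, div v = 0 on Ω × (0,T), where Ω ⊆ ℝ³ is a helical domain and v is C², P is C¹. Let v_ξ = v·ξ be the helical swirl and w = (w₁,w₂,w₃) = ∇×v the vorticity. Then on Ω × (0,T): (i) ∂ₜ v_ξ + v·∇v_ξ = 0, and (ii) ∂ₜ w₃ + v·∇w₃ = (1/h)(∂_{x₂}v_ξ ∂_{x₁}v₃ − ∂_{x₁}v_ξ ∂_{x₂}v₃). -/

import Mathlib

noncomputable section

open Real

/-- ℝ³ as functions `Fin 3 → ℝ`. -/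
abbrev V3 := Fin 3 → ℝ

/-- Partial derivative `∂_{x_i} f` of a scalar function on ℝ³. -/
def pd3 (i : Fin 3) (f : V3 → ℝ) (x : V3) : ℝ := fderiv ℝ f x (Pi.single i 1)

/-- The helical transformation `H_θ(x) = Q_θ x + (0,0,hθ)`. -/
def Hmap (h θ : ℝ) (x : V3) : V3 :=
  ![x 0 * Real.cos θ + x 1 * Real.sin θ,
    -(x 0) * Real.sin θ + x 1 * Real.cos θ,
    x 2 + h * θ]

/-- The rotation `Q_θ = diag(R_θ, 1)` acting on vectors of ℝ³. -/
def Qrot (θ : ℝ) (v : V3) : V3 :=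
  ![v 0 * Real.cos θ + v 1 * Real.sin θ,
    -(v 0) * Real.sin θ + v 1 * Real.cos θ,
    v 2]

/-- The vector field `ξ(x) = (x₂, −x₁, h)`. -/
def xiVec (h : ℝ) (x : V3) : V3 := ![x 1, -(x 0), h]

/-- The helical swirl `v_ξ = v ⋅ ξ`. -/
def swirl (h : ℝ) (v : V3 → V3) (x : V3) : ℝ := ∑ i : Fin 3, v x i * xiVec h x i

/-- Third component of the vorticity: `w₃ = ∂₁v₂ − ∂₂v₁`. -/
def w3 (v : V3 → V3) (x : V3) : ℝ :=
  pd3 0 (fun y => v y 1) x - pd3 1 (fun y => v y 0) x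

abbrev e3 (i : Fin 3) : V3 := Pi.single i 1

lemma pd3_congr {j : Fin 3} {f g : V3 → ℝ} {x : V3} (h : f =ᶠ[nhds x] g) :
    pd3 j f x = pd3 j g x := by unfold pd3; rw [h.fderiv_eq]

lemma pd3_add {j : Fin 3} {f g : V3 → ℝ} {x : V3} (hf : DifferentiableAt ℝ f x)
    (hg : DifferentiableAt ℝ g x) :
    pd3 j (fun y => f y + g y) x = pd3 j f x + pd3 j g x := by
  simp [pd3, fderiv_fun_add hf hg]

lemma pd3_sub {j : Fin 3} {f g : V3 → ℝ} {x : V3} (hf : DifferentiableAt ℝ f x)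
    (hg : DifferentiableAt ℝ g x) :
    pd3 j (fun y => f y - g y) x = pd3 j f x - pd3 j g x := by
  simp [pd3, fderiv_fun_sub hf hg]

lemma pd3_neg {j : Fin 3} {f : V3 → ℝ} {x : V3} :
    pd3 j (fun y => -(f y)) x = -(pd3 j f x) := by
  simp [pd3, fderiv_neg]

lemma pd3_mul {j : Fin 3} {f g : V3 → ℝ} {x : V3} (hf : DifferentiableAt ℝ f x)
    (hg : DifferentiableAt ℝ g x) :
    pd3 j (fun y => f y * g y) x = f x * pd3 j g x + g x * pd3 j f x := by
  simp [pd3, fderiv_fun_mul hf hg]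

lemma pd3_coord (j k : Fin 3) (x : V3) :
    pd3 j (fun y : V3 => y k) x = if k = j then 1 else 0 := by
  have h := (ContinuousLinearMap.proj (R := ℝ) (φ := fun _ : Fin 3 => ℝ) k).hasFDerivAt (x := x)
  have h2 : HasFDerivAt (fun y : V3 => y k)
      (ContinuousLinearMap.proj (R := ℝ) (φ := fun _ : Fin 3 => ℝ) k) x := h
  rw [pd3, h2.fderiv]
  simp [Pi.single_apply]

lemma hasDerivAt_comp_slice_t {f : ℝ × V3 → ℝ} {t : ℝ} {x : V3}
    (hf : DifferentiableAt ℝ f (t, x)) :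
    HasDerivAt (fun s => f (s, x)) (fderiv ℝ f (t, x) (1, 0)) t := by
  have h := hf.hasFDerivAt.comp_hasDerivAt t ((hasDerivAt_id t).prodMk (hasDerivAt_const t x))
  exact h

lemma pd3_slice_x {f : ℝ × V3 → ℝ} {t : ℝ} {x : V3}
    (hf : DifferentiableAt ℝ f (t, x)) (j : Fin 3) :
    pd3 j (fun y => f (t, y)) x = fderiv ℝ f (t, x) (0, e3 j) := by
  have h := hf.hasFDerivAt.comp x (hasFDerivAt_prodMk_right t x)
  have h2 : HasFDerivAt (fun y => f (t, y))
      ((fderiv ℝ f (t, x)).comp (ContinuousLinearMap.inr ℝ ℝ V3)) x := h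
  rw [pd3, h2.fderiv]
  simp

lemma differentiableAt_slice_x {f : ℝ × V3 → ℝ} {t : ℝ} {x : V3}
    (hf : DifferentiableAt ℝ f (t, x)) :
    DifferentiableAt ℝ (fun y => f (t, y)) x :=
  (hf.hasFDerivAt.comp x (hasFDerivAt_prodMk_right t x)).differentiableAt

lemma hasDerivAt_fderiv_slice_t {f : ℝ × V3 → ℝ} {t : ℝ} {x : V3}
    (hf : DifferentiableAt ℝ (fderiv ℝ f) (t, x)) (w : ℝ × V3) :
    HasDerivAt (fun s => fderiv ℝ f (s, x) w)
      (fderiv ℝ (fderiv ℝ f) (t, x) (1, 0) w) t := by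
  have h := (((ContinuousLinearMap.apply ℝ ℝ w).hasFDerivAt.comp (t, x)
    hf.hasFDerivAt).comp_hasDerivAt t ((hasDerivAt_id t).prodMk (hasDerivAt_const t x)))
  exact h

lemma hasFDerivAt_fderiv_slice_x {f : ℝ × V3 → ℝ} {t : ℝ} {x : V3}
    (hf : DifferentiableAt ℝ (fderiv ℝ f) (t, x)) (w : ℝ × V3) :
    HasFDerivAt (fun y => fderiv ℝ f (t, y) w)
      (((ContinuousLinearMap.apply ℝ ℝ w).comp (fderiv ℝ (fderiv ℝ f) (t, x))).comp
        (ContinuousLinearMap.inr ℝ ℝ V3)) x := by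
  have h := ((ContinuousLinearMap.apply ℝ ℝ w).hasFDerivAt.comp (t, x)
    hf.hasFDerivAt).comp x (hasFDerivAt_prodMk_right t x)
  exact h

lemma pd3_fderiv_slice_x {f : ℝ × V3 → ℝ} {t : ℝ} {x : V3}
    (hf : DifferentiableAt ℝ (fderiv ℝ f) (t, x)) (w : ℝ × V3) (k : Fin 3) :
    pd3 k (fun y => fderiv ℝ f (t, y) w) x
      = fderiv ℝ (fderiv ℝ f) (t, x) (0, e3 k) w := by
  have h2 := hasFDerivAt_fderiv_slice_x hf w
  rw [pd3, h2.fderiv]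
  simp

lemma pd3_pd3 {g : V3 → ℝ} {x : V3} (hg : DifferentiableAt ℝ (fderiv ℝ g) x) (i k : Fin 3) :
    pd3 k (fun y => pd3 i g y) x = fderiv ℝ (fderiv ℝ g) x (e3 k) (e3 i) := by
  have h := (ContinuousLinearMap.apply ℝ ℝ (e3 i)).hasFDerivAt.comp x hg.hasFDerivAt
  have h2 : HasFDerivAt (fun y => pd3 i g y)
      ((ContinuousLinearMap.apply ℝ ℝ (e3 i)).comp (fderiv ℝ (fderiv ℝ g) x)) x := h
  rw [pd3, h2.fderiv]
  simp

lemma pd3_const {j : Fin 3} {c : ℝ} {x : V3} : pd3 j (fun _ => c) x = 0 := by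
  simp [pd3]

lemma differentiableAt_coord (k : Fin 3) (x : V3) :
    DifferentiableAt ℝ (fun y : V3 => y k) x :=
  (ContinuousLinearMap.proj (R := ℝ) (φ := fun _ : Fin 3 => ℝ) k).differentiableAt

lemma xiVec_decomp (h : ℝ) (x : V3) :
    xiVec h x = x 1 • e3 0 + (-(x 0)) • e3 1 + h • e3 2 := by
  funext k
  fin_cases k <;> simp [xiVec, e3, Pi.single_apply]

lemma fderiv_xi_eq {h : ℝ} {g : V3 → ℝ} {x : V3} :
    fderiv ℝ g x (xiVec h x)
      = x 1 * pd3 0 g x - x 0 * pd3 1 g x + h * pd3 2 g x := by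
  rw [xiVec_decomp, map_add, map_add, map_smul, map_smul, map_smul]
  simp [pd3, smul_eq_mul]
  ring

lemma hasDerivAt_Hmap (h : ℝ) (x : V3) :
    HasDerivAt (fun θ => Hmap h θ x) (xiVec h x) 0 := by
  rw [hasDerivAt_pi]
  intro i
  fin_cases i
  · have := ((Real.hasDerivAt_cos 0).const_mul (x 0)).fun_add
      ((Real.hasDerivAt_sin 0).const_mul (x 1))
    simpa [Hmap, xiVec] using this
  · have := (((Real.hasDerivAt_sin 0).const_mul (-(x 0)))).fun_add
      ((Real.hasDerivAt_cos 0).const_mul (x 1))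
    simpa [Hmap, xiVec] using this
  · have := (hasDerivAt_const (0:ℝ) (x 2)).fun_add ((hasDerivAt_id (0:ℝ)).const_mul h)
    simpa [Hmap, xiVec] using this

lemma hasDerivAt_Qrot (w : V3) (i : Fin 3) :
    HasDerivAt (fun θ => Qrot θ w i) (![w 1, -(w 0), 0] i) 0 := by
  fin_cases i
  · have := ((Real.hasDerivAt_cos 0).const_mul (w 0)).fun_add
      ((Real.hasDerivAt_sin 0).const_mul (w 1))
    simpa [Qrot] using this
  · have := (((Real.hasDerivAt_sin 0).const_mul (-(w 0)))).fun_add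
      ((Real.hasDerivAt_cos 0).const_mul (w 1))
    simpa [Qrot] using this
  · simpa [Qrot] using hasDerivAt_const (0:ℝ) (w 2)

lemma Hmap_zero (h : ℝ) (x : V3) : Hmap h 0 x = x := by
  funext k; fin_cases k <;> simp [Hmap]

/-- For a helical solution of the Euler equations, the helical swirl is transported,
and `w₃` satisfies the stated transport equation with source. -/
theorem swirl_and_w3_transport (h T : ℝ) (hh : 0 < h) (hT : 0 < T)
    (Ω : Set V3) (hΩopen : IsOpen Ω) (hΩ : ∀ θ : ℝ, Hmap h θ '' Ω = Ω)
    (v : ℝ → V3 → V3) (P : ℝ → V3 → ℝ)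
    (hv : ∀ i : Fin 3, ContDiffOn ℝ 2 (fun q : ℝ × V3 => v q.1 q.2 i)
      (Set.Ioo 0 T ×ˢ Ω))
    (hP : ContDiffOn ℝ 1 (fun q : ℝ × V3 => P q.1 q.2) (Set.Ioo 0 T ×ˢ Ω))
    (hhel : ∀ t ∈ Set.Ioo (0 : ℝ) T, ∀ θ : ℝ, ∀ x ∈ Ω,
      v t (Hmap h θ x) = Qrot θ (v t x) ∧ P t (Hmap h θ x) = P t x)
    (heuler : ∀ t ∈ Set.Ioo (0 : ℝ) T, ∀ x ∈ Ω, ∀ i : Fin 3,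
      deriv (fun s => v s x i) t
        + ∑ j : Fin 3, v t x j * pd3 j (fun y => v t y i) x = -(pd3 i (P t) x))
    (hdiv : ∀ t ∈ Set.Ioo (0 : ℝ) T, ∀ x ∈ Ω,
      ∑ i : Fin 3, pd3 i (fun y => v t y i) x = 0) :
    ∀ t ∈ Set.Ioo (0 : ℝ) T, ∀ x ∈ Ω,
      (deriv (fun s => swirl h (v s) x) t
          + ∑ j : Fin 3, v t x j * pd3 j (swirl h (v t)) x = 0) ∧
      (deriv (fun s => w3 (v s) x) t
          + ∑ j : Fin 3, v t x j * pd3 j (w3 (v t)) x =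
        (1 / h) * (pd3 1 (swirl h (v t)) x * pd3 0 (fun y => v t y 2) x
          - pd3 0 (swirl h (v t)) x * pd3 1 (fun y => v t y 2) x)) := by
  intro t ht x hx
  have hne : h ≠ 0 := ne_of_gt hh
  set U : Set (ℝ × V3) := Set.Ioo 0 T ×ˢ Ω with hUdef
  have hUopen : IsOpen U := isOpen_Ioo.prod hΩopen
  have hq : (t, x) ∈ U := ⟨ht, hx⟩
  have hUnx : U ∈ nhds ((t, x) : ℝ × V3) := hUopen.mem_nhds hq
  -- differentiability of the joint functions
  have hFd : ∀ i : Fin 3, ∀ q ∈ U, DifferentiableAt ℝ (fun q : ℝ × V3 => v q.1 q.2 i) q :=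
    fun i q hqU => (((hv i).differentiableOn (by norm_num)).differentiableAt
      (hUopen.mem_nhds hqU))
  have hF1 : ∀ i : Fin 3, ContDiffOn ℝ 1 (fderiv ℝ (fun q : ℝ × V3 => v q.1 q.2 i)) U := by
    intro i
    have h2 : (2 : WithTop ℕ∞) = 1 + 1 := by norm_num
    have := hv i
    rw [h2] at this
    exact ((contDiffOn_succ_iff_fderiv_of_isOpen hUopen).1 this).2.2
  have hFd1 : ∀ i : Fin 3, ∀ q ∈ U,
      DifferentiableAt ℝ (fderiv ℝ (fun q : ℝ × V3 => v q.1 q.2 i)) q :=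
    fun i q hqU => ((hF1 i).differentiableOn (by norm_num)).differentiableAt
      (hUopen.mem_nhds hqU)
  -- slicing: spatial partials and time derivatives of v
  have hvd : ∀ i : Fin 3, ∀ y ∈ Ω, DifferentiableAt ℝ (fun z => v t z i) y :=
    fun i y hy => differentiableAt_slice_x (hFd i (t, y) ⟨ht, hy⟩)
  have hpd : ∀ i j : Fin 3, ∀ y ∈ Ω, pd3 j (fun z => v t z i) y
      = fderiv ℝ (fun q : ℝ × V3 => v q.1 q.2 i) (t, y) (0, e3 j) :=
    fun i j y hy => pd3_slice_x (hFd i (t, y) ⟨ht, hy⟩) j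
  have hdt : ∀ i : Fin 3, ∀ y ∈ Ω, deriv (fun s => v s y i) t
      = fderiv ℝ (fun q : ℝ × V3 => v q.1 q.2 i) (t, y) (1, 0) :=
    fun i y hy => (hasDerivAt_comp_slice_t (hFd i (t, y) ⟨ht, hy⟩)).deriv
  -- Euler equations in terms of the joint derivatives
  have hEulerF : ∀ i : Fin 3, ∀ y ∈ Ω,
      fderiv ℝ (fun q : ℝ × V3 => v q.1 q.2 i) (t, y) (1, 0)
        + (v t y 0 * fderiv ℝ (fun q : ℝ × V3 => v q.1 q.2 i) (t, y) (0, e3 0)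
          + v t y 1 * fderiv ℝ (fun q : ℝ × V3 => v q.1 q.2 i) (t, y) (0, e3 1)
          + v t y 2 * fderiv ℝ (fun q : ℝ × V3 => v q.1 q.2 i) (t, y) (0, e3 2))
        = -(pd3 i (P t) y) := by
    intro i y hy
    have := heuler t ht y hy i
    rw [Fin.sum_univ_three] at this
    rw [← hdt i y hy, ← hpd i 0 y hy, ← hpd i 1 y hy, ← hpd i 2 y hy]
    linarith [this]
  -- helical pointwise identities for v
  have hHel : ∀ i : Fin 3, fderiv ℝ (fun z => v t z i) x (xiVec h x)
      = ![v t x 1, -(v t x 0), 0] i := by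
    intro i
    have hdiff := hvd i x hx
    have hfd : HasFDerivAt (fun z => v t z i) (fderiv ℝ (fun z => v t z i) x)
        (Hmap h 0 x) := by rw [Hmap_zero]; exact hdiff.hasFDerivAt
    have hc := hfd.comp_hasDerivAt 0 (hasDerivAt_Hmap h x)
    have heq : (fun θ => v t (Hmap h θ x) i) = fun θ => Qrot θ (v t x) i := by
      funext θ; rw [(hhel t ht θ x hx).1]
    have hc2 : HasDerivAt (fun θ => v t (Hmap h θ x) i)
        (fderiv ℝ (fun z => v t z i) x (xiVec h x)) 0 := hc
    rw [heq] at hc2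
    exact hc2.unique (hasDerivAt_Qrot (v t x) i)
  -- helical pointwise identity for P
  have hPdiff : DifferentiableAt ℝ (fun z => P t z) x :=
    differentiableAt_slice_x ((hP.differentiableOn (by norm_num)).differentiableAt hUnx)
  have hHelP : fderiv ℝ (fun z => P t z) x (xiVec h x) = 0 := by
    have hfd : HasFDerivAt (fun z => P t z) (fderiv ℝ (fun z => P t z) x)
        (Hmap h 0 x) := by rw [Hmap_zero]; exact hPdiff.hasFDerivAt
    have hc := hfd.comp_hasDerivAt 0 (hasDerivAt_Hmap h x)
    have hc2 : HasDerivAt (fun θ => P t (Hmap h θ x))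
        (fderiv ℝ (fun z => P t z) x (xiVec h x)) 0 := hc
    have heq : (fun θ => P t (Hmap h θ x)) = fun _ => P t x := by
      funext θ; rw [(hhel t ht θ x hx).2]
    rw [heq] at hc2
    exact hc2.unique (hasDerivAt_const 0 (P t x))
  -- component forms
  have hHelc : ∀ i : Fin 3,
      x 1 * fderiv ℝ (fun q : ℝ × V3 => v q.1 q.2 i) (t, x) (0, e3 0)
      - x 0 * fderiv ℝ (fun q : ℝ × V3 => v q.1 q.2 i) (t, x) (0, e3 1)
      + h * fderiv ℝ (fun q : ℝ × V3 => v q.1 q.2 i) (t, x) (0, e3 2)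
      = ![v t x 1, -(v t x 0), 0] i := by
    intro i
    have := hHel i
    rw [fderiv_xi_eq, hpd i 0 x hx, hpd i 1 x hx, hpd i 2 x hx] at this
    exact this
  have hHelPc : x 1 * pd3 0 (P t) x - x 0 * pd3 1 (P t) x + h * pd3 2 (P t) x = 0 := by
    have := hHelP
    rw [fderiv_xi_eq] at this
    exact this
  -- expansion of the swirl
  have hswfun : ∀ w : V3 → V3, swirl h w
      = fun y => w y 0 * y 1 + w y 1 * (-(y 0)) + w y 2 * h := by
    intro w; funext y
    simp [swirl, xiVec, Fin.sum_univ_three]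
  have hswq : ∀ j : Fin 3, pd3 j (swirl h (v t)) x
      = x 1 * fderiv ℝ (fun q : ℝ × V3 => v q.1 q.2 0) (t, x) (0, e3 j)
        + (if (1 : Fin 3) = j then 1 else 0) * v t x 0
        - x 0 * fderiv ℝ (fun q : ℝ × V3 => v q.1 q.2 1) (t, x) (0, e3 j)
        - (if (0 : Fin 3) = j then 1 else 0) * v t x 1
        + h * fderiv ℝ (fun q : ℝ × V3 => v q.1 q.2 2) (t, x) (0, e3 j) := by
    intro j
    rw [hswfun]
    have d0 := hvd 0 x hx; have d1 := hvd 1 x hx; have d2 := hvd 2 x hx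
    have dc0 := differentiableAt_coord 0 x
    have dc1 := differentiableAt_coord 1 x
    have dm0 : DifferentiableAt ℝ (fun y : V3 => v t y 0 * y 1) x := d0.mul dc1
    have dm1 : DifferentiableAt ℝ (fun y : V3 => v t y 1 * (-(y 0))) x := d1.mul dc0.neg
    have dm2 : DifferentiableAt ℝ (fun y : V3 => v t y 2 * h) x :=
      d2.mul (differentiableAt_const h)
    rw [pd3_add (dm0.fun_add dm1) dm2, pd3_add dm0 dm1,
      pd3_mul d0 dc1, pd3_mul d1 dc0.fun_neg, pd3_mul d2 (differentiableAt_const h),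
      pd3_neg (f := fun y : V3 => y 0), pd3_coord, pd3_coord, pd3_const,
      hpd 0 j x hx, hpd 1 j x hx, hpd 2 j x hx]
    ring
  -- time derivative of the swirl
  have hswt : deriv (fun s => swirl h (v s) x) t
      = x 1 * fderiv ℝ (fun q : ℝ × V3 => v q.1 q.2 0) (t, x) (1, 0)
        - x 0 * fderiv ℝ (fun q : ℝ × V3 => v q.1 q.2 1) (t, x) (1, 0)
        + h * fderiv ℝ (fun q : ℝ × V3 => v q.1 q.2 2) (t, x) (1, 0) := by
    have hfun : (fun s => swirl h (v s) x)
        = fun s => v s x 0 * x 1 + v s x 1 * (-(x 0)) + v s x 2 * h := by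
      funext s; rw [hswfun]
    rw [hfun]
    have h0 := (hasDerivAt_comp_slice_t (hFd 0 (t, x) hq)).mul_const (x 1)
    have h1 := (hasDerivAt_comp_slice_t (hFd 1 (t, x) hq)).mul_const (-(x 0))
    have h2 := (hasDerivAt_comp_slice_t (hFd 2 (t, x) hq)).mul_const h
    have := ((h0.fun_add h1).fun_add h2).deriv
    rw [this]; ring
  constructor
  · -- part (i)
    rw [Fin.sum_univ_three, hswq 0, hswq 1, hswq 2, hswt]
    have hE0 := hEulerF 0 x hx
    have hE1 := hEulerF 1 x hx
    have hE2 := hEulerF 2 x hx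
    have hc0 := hHelc 0; have hc1 := hHelc 1; have hc2 := hHelc 2
    simp only [Matrix.cons_val_zero, Matrix.cons_val_one, Matrix.head_cons,
      Matrix.cons_val_two, Matrix.tail_cons] at hc0 hc1 hc2
    norm_num [Fin.ext_iff]
    linear_combination x 1 * hE0 - x 0 * hE1 + h * hE2 - hHelPc
  · -- part (ii)
    -- time derivative of w3
    have hw3ev : (fun s => w3 (v s) x) =ᶠ[nhds t] (fun s =>
        fderiv ℝ (fun q : ℝ × V3 => v q.1 q.2 1) (s, x) (0, e3 0)
        - fderiv ℝ (fun q : ℝ × V3 => v q.1 q.2 0) (s, x) (0, e3 1)) := by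
      filter_upwards [isOpen_Ioo.mem_nhds ht] with s hs
      rw [w3, pd3_slice_x (hFd 1 (s, x) ⟨hs, hx⟩) 0, pd3_slice_x (hFd 0 (s, x) ⟨hs, hx⟩) 1]
    have hw3t : deriv (fun s => w3 (v s) x) t
        = fderiv ℝ (fderiv ℝ (fun q : ℝ × V3 => v q.1 q.2 1)) (t, x) (1, 0) (0, e3 0)
        - fderiv ℝ (fderiv ℝ (fun q : ℝ × V3 => v q.1 q.2 0)) (t, x) (1, 0) (0, e3 1) := by
      have h1 := (hasDerivAt_fderiv_slice_t (hFd1 1 (t, x) hq) (0, e3 0)).sub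
        (hasDerivAt_fderiv_slice_t (hFd1 0 (t, x) hq) (0, e3 1))
      exact (h1.congr_of_eventuallyEq hw3ev).deriv
    -- spatial derivatives of w3
    have hw3x : ∀ j : Fin 3, pd3 j (w3 (v t)) x
        = fderiv ℝ (fderiv ℝ (fun q : ℝ × V3 => v q.1 q.2 1)) (t, x) (0, e3 j) (0, e3 0)
        - fderiv ℝ (fderiv ℝ (fun q : ℝ × V3 => v q.1 q.2 0)) (t, x) (0, e3 j) (0, e3 1) := by
      intro j
      have hev : w3 (v t) =ᶠ[nhds x] (fun y =>
          fderiv ℝ (fun q : ℝ × V3 => v q.1 q.2 1) (t, y) (0, e3 0)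
          - fderiv ℝ (fun q : ℝ × V3 => v q.1 q.2 0) (t, y) (0, e3 1)) := by
        filter_upwards [hΩopen.mem_nhds hx] with y hy
        rw [w3, pd3_slice_x (hFd 1 (t, y) ⟨ht, hy⟩) 0, pd3_slice_x (hFd 0 (t, y) ⟨ht, hy⟩) 1]
      rw [pd3_congr hev,
        pd3_sub ((hasFDerivAt_fderiv_slice_x (hFd1 1 (t, x) hq) (0, e3 0)).differentiableAt)
          ((hasFDerivAt_fderiv_slice_x (hFd1 0 (t, x) hq) (0, e3 1)).differentiableAt),
        pd3_fderiv_slice_x (hFd1 1 (t, x) hq) (0, e3 0) j,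
        pd3_fderiv_slice_x (hFd1 0 (t, x) hq) (0, e3 1) j]
    -- P is C^2 in space
    have hincl : ContDiffOn ℝ 1 (fun y : V3 => ((t, y) : ℝ × V3)) Ω :=
      (contDiff_const.prodMk contDiff_id).contDiffOn
    have hmaps : Set.MapsTo (fun y : V3 => ((t, y) : ℝ × V3)) Ω U := fun y hy => ⟨ht, hy⟩
    have hvx1 : ∀ i : Fin 3, ContDiffOn ℝ 1 (fun y => v t y i) Ω := fun i =>
      ((hv i).of_le (by norm_num)).comp hincl hmaps
    have hGx : ∀ i : Fin 3, ∀ w : ℝ × V3, ContDiffOn ℝ 1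
        (fun y => fderiv ℝ (fun q : ℝ × V3 => v q.1 q.2 i) (t, y) w) Ω := by
      intro i w
      have hcomp : ContDiffOn ℝ 1
          (fun y => fderiv ℝ (fun q : ℝ × V3 => v q.1 q.2 i) (t, y)) Ω :=
        (hF1 i).comp hincl hmaps
      exact hcomp.clm_apply contDiffOn_const
    have hPi : ∀ i : Fin 3, ContDiffOn ℝ 1 (fun y => pd3 i (P t) y) Ω := by
      intro i
      apply ContDiffOn.congr (((hGx i (1, 0)).add
        ((((hvx1 0).mul (hGx i (0, e3 0))).add ((hvx1 1).mul (hGx i (0, e3 1)))).add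
          ((hvx1 2).mul (hGx i (0, e3 2))))).neg)
      intro y hy
      have := hEulerF i y hy
      linarith [this]
    have hPx1 : ContDiffOn ℝ 1 (fun y => P t y) Ω := hP.comp hincl hmaps
    have hPgrad : ContDiffOn ℝ 1 (fderiv ℝ (fun y => P t y)) Ω := by
      rw [contDiffOn_clm_apply]
      intro w
      have hcomb : ContDiffOn ℝ 1 (fun y => w 0 * pd3 0 (P t) y
          + w 1 * pd3 1 (P t) y + w 2 * pd3 2 (P t) y) Ω :=
        ((contDiffOn_const.mul (hPi 0)).add
          (contDiffOn_const.mul (hPi 1))).add (contDiffOn_const.mul (hPi 2))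
      apply ContDiffOn.congr hcomb
      intro y hy
      have hw : w = w 0 • e3 0 + w 1 • e3 1 + w 2 • e3 2 := by
        funext k; fin_cases k <;> simp [e3, Pi.single_apply]
      conv_lhs => rw [hw]
      rw [map_add, map_add, map_smul, map_smul, map_smul]
      simp [pd3, smul_eq_mul]
    have hP2 : ContDiffOn ℝ 2 (fun y => P t y) Ω := by
      have h2 : (2 : WithTop ℕ∞) = 1 + 1 := by norm_num
      rw [h2, contDiffOn_succ_iff_fderiv_of_isOpen hΩopen]
      exact ⟨hPx1.differentiableOn one_ne_zero, by simp, hPgrad⟩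
    have hPsd : DifferentiableAt ℝ (fderiv ℝ (fun y => P t y)) x :=
      (hPgrad.differentiableOn one_ne_zero).differentiableAt (hΩopen.mem_nhds hx)
    have hPsymm : IsSymmSndFDerivAt ℝ (fun y => P t y) x :=
      (hP2.contDiffAt (hΩopen.mem_nhds hx)).isSymmSndFDerivAt (by simp)
    have hFsymm : ∀ i : Fin 3,
        IsSymmSndFDerivAt ℝ (fun q : ℝ × V3 => v q.1 q.2 i) (t, x) := fun i =>
      ((hv i).contDiffAt hUnx).isSymmSndFDerivAt (by simp)
    -- differentiated Euler equations
    have hDE : ∀ i k : Fin 3,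
        fderiv ℝ (fderiv ℝ (fun q : ℝ × V3 => v q.1 q.2 i)) (t, x) (0, e3 k) (1, 0)
        + (((v t x 0 * fderiv ℝ (fderiv ℝ (fun q : ℝ × V3 => v q.1 q.2 i)) (t, x) (0, e3 k) (0, e3 0)
            + fderiv ℝ (fun q : ℝ × V3 => v q.1 q.2 i) (t, x) (0, e3 0)
              * fderiv ℝ (fun q : ℝ × V3 => v q.1 q.2 0) (t, x) (0, e3 k))
          + (v t x 1 * fderiv ℝ (fderiv ℝ (fun q : ℝ × V3 => v q.1 q.2 i)) (t, x) (0, e3 k) (0, e3 1)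
            + fderiv ℝ (fun q : ℝ × V3 => v q.1 q.2 i) (t, x) (0, e3 1)
              * fderiv ℝ (fun q : ℝ × V3 => v q.1 q.2 1) (t, x) (0, e3 k)))
          + (v t x 2 * fderiv ℝ (fderiv ℝ (fun q : ℝ × V3 => v q.1 q.2 i)) (t, x) (0, e3 k) (0, e3 2)
            + fderiv ℝ (fun q : ℝ × V3 => v q.1 q.2 i) (t, x) (0, e3 2)
              * fderiv ℝ (fun q : ℝ × V3 => v q.1 q.2 2) (t, x) (0, e3 k)))
        = -(fderiv ℝ (fderiv ℝ (fun y => P t y)) x (e3 k) (e3 i)) := by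
      intro i k
      have hev : (fun y => fderiv ℝ (fun q : ℝ × V3 => v q.1 q.2 i) (t, y) (1, 0)
          + (v t y 0 * fderiv ℝ (fun q : ℝ × V3 => v q.1 q.2 i) (t, y) (0, e3 0)
            + v t y 1 * fderiv ℝ (fun q : ℝ × V3 => v q.1 q.2 i) (t, y) (0, e3 1)
            + v t y 2 * fderiv ℝ (fun q : ℝ × V3 => v q.1 q.2 i) (t, y) (0, e3 2)))
          =ᶠ[nhds x] (fun y => -(pd3 i (P t) y)) := by
        filter_upwards [hΩopen.mem_nhds hx] with y hy
        exact hEulerF i y hy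
      have hkey := pd3_congr (j := k) hev
      have dA : DifferentiableAt ℝ
          (fun y => fderiv ℝ (fun q : ℝ × V3 => v q.1 q.2 i) (t, y) (1, 0)) x :=
        (hasFDerivAt_fderiv_slice_x (hFd1 i (t, x) hq) (1, 0)).differentiableAt
      have dG : ∀ j : Fin 3, DifferentiableAt ℝ
          (fun y => fderiv ℝ (fun q : ℝ × V3 => v q.1 q.2 i) (t, y) (0, e3 j)) x := fun j =>
        (hasFDerivAt_fderiv_slice_x (hFd1 i (t, x) hq) (0, e3 j)).differentiableAt
      have dm : ∀ j : Fin 3, DifferentiableAt ℝ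
          (fun y => v t y j * fderiv ℝ (fun q : ℝ × V3 => v q.1 q.2 i) (t, y) (0, e3 j)) x :=
        fun j => (hvd j x hx).mul (dG j)
      rw [pd3_add dA ((dm 0).fun_add (dm 1) |>.fun_add (dm 2)),
        pd3_add ((dm 0).fun_add (dm 1)) (dm 2), pd3_add (dm 0) (dm 1),
        pd3_mul (hvd 0 x hx) (dG 0), pd3_mul (hvd 1 x hx) (dG 1), pd3_mul (hvd 2 x hx) (dG 2),
        pd3_fderiv_slice_x (hFd1 i (t, x) hq) (1, 0) k,
        pd3_fderiv_slice_x (hFd1 i (t, x) hq) (0, e3 0) k,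
        pd3_fderiv_slice_x (hFd1 i (t, x) hq) (0, e3 1) k,
        pd3_fderiv_slice_x (hFd1 i (t, x) hq) (0, e3 2) k,
        pd3_neg, pd3_pd3 hPsd i k,
        hpd 0 k x hx, hpd 1 k x hx, hpd 2 k x hx] at hkey
      linarith [hkey]
    -- assemble
    rw [Fin.sum_univ_three, hw3t, hw3x 0, hw3x 1, hw3x 2, hswq 0, hswq 1,
      hpd 2 0 x hx, hpd 2 1 x hx]
    have hD := hdiv t ht x hx
    rw [Fin.sum_univ_three, hpd 0 0 x hx, hpd 1 1 x hx, hpd 2 2 x hx] at hD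
    have h10 := hDE 1 0
    have h01 := hDE 0 1
    have hc0 := hHelc 0; have hc1 := hHelc 1; have hc2 := hHelc 2
    simp only [Matrix.cons_val_zero, Matrix.cons_val_one, Matrix.head_cons,
      Matrix.cons_val_two, Matrix.tail_cons] at hc0 hc1 hc2
    have hs1 := hFsymm 1 (1, 0) (0, e3 0)
    have hs2 := hFsymm 0 (1, 0) (0, e3 1)
    have hs3 := hFsymm 1 (0, e3 1) (0, e3 0)
    have hs4 := hFsymm 1 (0, e3 2) (0, e3 0)
    have hs5 := hFsymm 0 (0, e3 0) (0, e3 1)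
    have hs6 := hFsymm 0 (0, e3 2) (0, e3 1)
    have hps := hPsymm (e3 0) (e3 1)
    norm_num [Fin.ext_iff]
    rw [inv_mul_eq_div, eq_div_iff hne]
    linear_combination h * (h10 - h01 + hs1 - hs2 - hps
        + v t x 1 * hs3 + v t x 2 * hs4 - v t x 0 * hs5 - v t x 2 * hs6)
      + (fderiv ℝ (fun q : ℝ × V3 => v q.1 q.2 1) (t, x) (0, e3 0)
          - fderiv ℝ (fun q : ℝ × V3 => v q.1 q.2 0) (t, x) (0, e3 1)) * hc2
      - fderiv ℝ (fun q : ℝ × V3 => v q.1 q.2 2) (t, x) (0, e3 0) * hc1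
      + fderiv ℝ (fun q : ℝ × V3 => v q.1 q.2 2) (t, x) (0, e3 1) * hc0
      - h * (fderiv ℝ (fun q : ℝ × V3 => v q.1 q.2 1) (t, x) (0, e3 0)
          - fderiv ℝ (fun q : ℝ × V3 => v q.1 q.2 0) (t, x) (0, e3 1)) * hD
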